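/- In the instance D′(φ): if the 3-CNF formula φ is satisfiable, then the data exchange x⁰ is not core-stable; i.e., there exist a nonempty set U of agents and an exchange x^U over U with u_i(x^U) > u_i(x⁰) for every i ∈ U. -/
import Mathlib


open scoped BigOperators
open Classical

namespace DataExchangeSAT

noncomputable section

/-- A data exchange on an arbitrary agent type: entries in `[0,1]`, zero diagonal. -/
def IsExch {A : Type*} (x : A → A → ℝ) : Prop :=
  (∀ a b, 0 ≤ x a b ∧ x a b ≤ 1) ∧ ∀ a, x a a = 0

/-- An exchange over the coalition `U`: zero outside `U × U`. -/
def IsExchOver {A : Type*} (U : Set A) (x : A → A → ℝ) : Prop :=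
  IsExch x ∧ ∀ a b, (a ∉ U ∨ b ∉ U) → x a b = 0

/-- Core stability with respect to a utility function `u`. -/
def CoreStable {A : Type*} (u : (A → A → ℝ) → A → ℝ) (x : A → A → ℝ) : Prop :=
  ¬ ∃ (U : Set A) (y : A → A → ℝ), U.Nonempty ∧ IsExchOver U y ∧ ∀ a ∈ U, u x a < u y a

/-- The vertices of the directed graph built from a 3-CNF formula with `N` variables and
`M` clauses: selection vertices `s_1, …, s_{N+1}` (`sel k` is `s_{k+1}`), literal vertices
(`lit i true` is `v_{i+1}` and `lit i false` is `v̄_{i+1}`), and clause vertices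
(`cls j` is `C_{j+1}`). -/
inductive Vtx (N M : ℕ) where
  | sel : Fin (N + 1) → Vtx N M
  | lit : Fin N → Bool → Vtx N M
  | cls : Fin M → Vtx N M
deriving DecidableEq

instance (N M : ℕ) : Fintype (Vtx N M) := by
  classical
  exact Fintype.ofInjective
    (fun v : Vtx N M => match v with
      | .sel k => (Sum.inl k : Fin (N+1) ⊕ ((Fin N × Bool) ⊕ Fin M))
      | .lit i b => Sum.inr (Sum.inl (i, b))
      | .cls j => Sum.inr (Sum.inr j))
    (by intro a b hab; cases a <;> cases b <;> simp_all)

/-- The agents of the instance `D′(φ)`: `none` is the generous agent `g`, and `some v` is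
the normal agent corresponding to the vertex `v`. -/
abbrev Agent (N M : ℕ) := Option (Vtx N M)

variable {N M : ℕ}

/-- The arcs of the directed graph built from the 3-CNF formula whose `j`-th clause has the
three literals `litf j 0, litf j 1, litf j 2` (a literal is a variable together with a
polarity): `v_i → s_i` and `v̄_i → s_i`; `s_{i+1} → v_i` and `s_{i+1} → v̄_i`; the path
`s_1 → C_M → C_{M-1} → ⋯ → C_1 → s_{N+1}`; and an arc from each clause to the negation of
each literal it contains. -/
def arc (litf : Fin M → Fin 3 → Fin N × Bool) : Vtx N M → Vtx N M → Prop
  | .lit i _, .sel k => k = Fin.castSucc i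
  | .sel k, .lit i _ => k = Fin.succ i
  | .sel k, .cls j => k = 0 ∧ (j : ℕ) = M - 1
  | .cls j, .cls j' => (j : ℕ) = (j' : ℕ) + 1
  | .cls j, .sel k => (j : ℕ) = 0 ∧ k = Fin.last N
  | .cls j, .lit i b => ∃ t, litf j t = (i, !b)
  | _, _ => False

/-- The in-degree of a vertex in the directed graph. -/
def inDeg (litf : Fin M → Fin 3 → Fin N × Bool) (v : Vtx N M) : ℕ :=
  (Finset.univ.filter (fun w => arc litf w v)).card

/-- The payoff of the normal agent `a`: the payoff from the generous agent plus the sum of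
the shares received along incoming arcs. -/
def payoff (ε : ℝ) (litf : Fin M → Fin 3 → Fin N × Bool)
    (x : Agent N M → Agent N M → ℝ) (a : Vtx N M) : ℝ :=
  (match a with
    | .lit i b => ((inDeg litf (Vtx.lit i b) : ℝ) - ε) * x none (some (Vtx.lit i b))
    | _ => (1 - ε) * x none (some a))
  + ∑ w ∈ Finset.univ.filter (fun w => arc litf w a), x (some w) (some a)

/-- The threshold `τ`: `3` for clause agents, `1` for selection and literal agents. -/
def τ : Vtx N M → ℝ
  | .cls _ => 3
  | _ => 1

/-- The cost of the normal agent `a`: `(1/μ)·max(Σ_j x_{a,j} − τ_a, 0)`. -/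
def cost (μ : ℝ) (x : Agent N M → Agent N M → ℝ) (a : Vtx N M) : ℝ :=
  (1 / μ) * max ((∑ b : Agent N M, x (some a) b) - τ a) 0

/-- The utility function of the instance `D′(φ)`: the generous agent always has utility `0`,
and a normal agent's utility is payoff minus cost. -/
def util (ε μ : ℝ) (litf : Fin M → Fin 3 → Fin N × Bool)
    (x : Agent N M → Agent N M → ℝ) : Agent N M → ℝ
  | none => 0
  | some a => payoff ε litf x a - cost μ x a

/-- The data exchange `x⁰`: the generous agent shares everything with every normal agent;
all other shares are `0`. -/
def x0 : Agent N M → Agent N M → ℝ :=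
  fun a b => if a = none ∧ b ≠ none then 1 else 0

/-- Satisfiability of the 3-CNF formula whose clauses are given by `litf`. -/
def Satisfiable (litf : Fin M → Fin 3 → Fin N × Bool) : Prop :=
  ∃ f : Fin N → Bool, ∀ j : Fin M, ∃ t : Fin 3, f (litf j t).1 = (litf j t).2

/-! ### Auxiliary material for the proof of Statement 18 -/

/-- Membership in the vertex part of the blocking coalition: all selection and clause
vertices, and the literal vertices chosen by the assignment `f`. -/
def inS (f : Fin N → Bool) : Vtx N M → Prop
  | .lit i b => b = f i
  | _ => True

/-- The blocking exchange: share `1` along every arc inside the coalition. -/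
def yex (litf : Fin M → Fin 3 → Fin N × Bool) (f : Fin N → Bool) :
    Agent N M → Agent N M → ℝ
  | some v, some w => if arc litf v w ∧ inS f v ∧ inS f w then 1 else 0
  | _, _ => 0

lemma yex_none {litf : Fin M → Fin 3 → Fin N × Bool} {f : Fin N → Bool} (b : Agent N M) :
    yex litf f none b = 0 := rfl

lemma yex_some_none {litf : Fin M → Fin 3 → Fin N × Bool} {f : Fin N → Bool} (v : Vtx N M) :
    yex litf f (some v) none = 0 := rfl

lemma yex_some_some {litf : Fin M → Fin 3 → Fin N × Bool} {f : Fin N → Bool} (v w : Vtx N M) :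
    yex litf f (some v) (some w) = if arc litf v w ∧ inS f v ∧ inS f w then 1 else 0 := rfl

lemma yex_nonneg {litf : Fin M → Fin 3 → Fin N × Bool} {f : Fin N → Bool} (a b : Agent N M) :
    0 ≤ yex litf f a b := by
  rcases a with _ | v
  · rw [yex_none]
  · rcases b with _ | w
    · rw [yex_some_none]
    · rw [yex_some_some]; split_ifs <;> norm_num

lemma arc_irrefl {litf : Fin M → Fin 3 → Fin N × Bool} (v : Vtx N M) :
    ¬ arc litf v v := by
  cases v with
  | sel k => exact fun h => h
  | lit i b => exact fun h => h
  | cls j =>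
    intro h
    have h' : (j : ℕ) = (j : ℕ) + 1 := h
    omega

/-- Every in-neighbour of a literal vertex lies in the coalition. -/
lemma inS_of_arc_lit {litf : Fin M → Fin 3 → Fin N × Bool} {f : Fin N → Bool}
    {w : Vtx N M} {i : Fin N} {b : Bool} (h : arc litf w (Vtx.lit i b)) : inS f w := by
  cases w with
  | sel k => exact trivial
  | lit i' b' => exact h.elim
  | cls j => exact trivial

/-- The total amount sent by `v` under the blocking exchange. -/
lemma outsum_eq {litf : Fin M → Fin 3 → Fin N × Bool} {f : Fin N → Bool}
    {v : Vtx N M} (hv : inS f v) :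
    ∑ b : Agent N M, yex litf f (some v) b =
      ((Finset.univ.filter (fun w => arc litf v w ∧ inS f w)).card : ℝ) := by
  rw [Fintype.sum_option, yex_some_none, zero_add]
  have h : ∀ w : Vtx N M, yex litf f (some v) (some w)
      = if arc litf v w ∧ inS f w then 1 else 0 := by
    intro w
    rw [yex_some_some]
    by_cases h : arc litf v w ∧ inS f w
    · rw [if_pos ⟨h.1, hv, h.2⟩, if_pos h]
    · rw [if_neg (by tauto), if_neg h]
  simp_rw [h]
  rw [Finset.sum_boole]

/-- The blocking exchange costs nothing when the outgoing degree in the coalition is at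
most the threshold. -/
lemma cost_yex_zero {litf : Fin M → Fin 3 → Fin N × Bool} {f : Fin N → Bool} {μ : ℝ}
    {v : Vtx N M} (hv : inS f v)
    (h : ((Finset.univ.filter (fun w => arc litf v w ∧ inS f w)).card : ℝ) ≤ τ v) :
    cost μ (yex litf f) v = 0 := by
  rw [cost, outsum_eq hv, max_eq_right (by linarith), mul_zero]

/-- Lower bound on the incoming payoff sum, from a single in-neighbour in the coalition. -/
lemma insum_ge_one {litf : Fin M → Fin 3 → Fin N × Bool} {f : Fin N → Bool}
    {v : Vtx N M} (hv : inS f v) (w0 : Vtx N M) (hw0 : arc litf w0 v) (hw0S : inS f w0) :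
    (1 : ℝ) ≤ ∑ w ∈ Finset.univ.filter (fun w => arc litf w v),
      yex litf f (some w) (some v) := by
  have hmem : w0 ∈ Finset.univ.filter (fun w => arc litf w v) :=
    Finset.mem_filter.2 ⟨Finset.mem_univ _, hw0⟩
  have h1 : yex litf f (some w0) (some v) = 1 := by
    rw [yex_some_some, if_pos ⟨hw0, hw0S, hv⟩]
  calc (1 : ℝ) = yex litf f (some w0) (some v) := h1.symm
    _ ≤ _ := Finset.single_le_sum (fun w _ => yex_nonneg _ _) hmem

/-- A chosen literal agent receives its full in-degree under the blocking exchange. -/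
lemma insum_lit {litf : Fin M → Fin 3 → Fin N × Bool} {f : Fin N → Bool}
    {i : Fin N} {b : Bool} (hv : inS (N := N) (M := M) f (Vtx.lit i b)) :
    ∑ w ∈ Finset.univ.filter (fun w => arc litf w (Vtx.lit i b)),
        yex litf f (some w) (some (Vtx.lit i b))
      = (inDeg litf (Vtx.lit i b) : ℝ) := by
  have h : ∀ w ∈ Finset.univ.filter (fun w => arc litf w (Vtx.lit i b)),
      yex litf f (some w) (some (Vtx.lit i b)) = 1 := by
    intro w hw
    have harc : arc litf w (Vtx.lit i b) := (Finset.mem_filter.1 hw).2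
    rw [yex_some_some, if_pos ⟨harc, inS_of_arc_lit harc, hv⟩]
  rw [Finset.sum_congr rfl h, Finset.sum_const, nsmul_eq_mul, mul_one, inDeg]

/-- A selection agent sends at most one unit under the blocking exchange. -/
lemma sel_out_card {litf : Fin M → Fin 3 → Fin N × Bool} {f : Fin N → Bool} (k : Fin (N + 1)) :
    (Finset.univ.filter (fun w => arc litf (Vtx.sel k) w ∧ inS f w)).card ≤ 1 := by
  rw [Finset.card_le_one]
  intro a ha c hc
  simp only [Finset.mem_filter, Finset.mem_univ, true_and] at ha hc
  cases a with
  | sel k' => exact ha.1.elim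
  | lit i b =>
    cases c with
    | sel k' => exact hc.1.elim
    | lit i' b' =>
      have h1 : k = Fin.succ i := ha.1
      have h2 : k = Fin.succ i' := hc.1
      have hval : (i : ℕ) = (i' : ℕ) := by
        have e1 := congrArg Fin.val h1
        have e2 := congrArg Fin.val h2
        rw [Fin.val_succ] at e1
        rw [Fin.val_succ] at e2
        omega
      obtain rfl : i = i' := Fin.ext hval
      have hb : b = b' := by
        have hb1 : b = f i := ha.2
        have hb2 : b' = f i := hc.2
        rw [hb1, hb2]
      rw [hb]
    | cls j =>
      have h1 := congrArg Fin.val ha.1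
      have h2 := congrArg Fin.val hc.1.1
      rw [Fin.val_succ] at h1
      rw [Fin.val_zero] at h2
      omega
  | cls j =>
    cases c with
    | sel k' => exact hc.1.elim
    | lit i' b' =>
      have h1 := congrArg Fin.val ha.1.1
      have h2 := congrArg Fin.val hc.1
      rw [Fin.val_zero] at h1
      rw [Fin.val_succ] at h2
      omega
    | cls j' =>
      have h1 : (j : ℕ) = M - 1 := ha.1.2
      have h2 : (j' : ℕ) = M - 1 := hc.1.2
      have : j = j' := Fin.ext (by omega)
      rw [this]

/-- A literal agent sends at most one unit under the blocking exchange. -/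
lemma lit_out_card {litf : Fin M → Fin 3 → Fin N × Bool} {f : Fin N → Bool}
    (i : Fin N) (b : Bool) :
    (Finset.univ.filter (fun w => arc litf (Vtx.lit i b) w ∧ inS f w)).card ≤ 1 := by
  rw [Finset.card_le_one]
  intro a ha c hc
  simp only [Finset.mem_filter, Finset.mem_univ, true_and] at ha hc
  cases a with
  | sel k =>
    cases c with
    | sel k' =>
      have h1 : k = Fin.castSucc i := ha.1
      have h2 : k' = Fin.castSucc i := hc.1
      rw [h1, h2]
    | lit i' b' => exact hc.1.elim
    | cls j => exact hc.1.elim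
  | lit i' b' => exact ha.1.elim
  | cls j => exact ha.1.elim

/-- A clause agent whose clause is satisfied by `f` sends at most three units under the
blocking exchange. -/
lemma cls_out_card {litf : Fin M → Fin 3 → Fin N × Bool} {f : Fin N → Bool} (j : Fin M)
    (t0 : Fin 3) (ht0 : f (litf j t0).1 = (litf j t0).2) :
    (Finset.univ.filter (fun w => arc litf (Vtx.cls j) w ∧ inS f w)).card ≤ 3 := by
  have hBlt : (j : ℕ) - 1 < M := by have := j.isLt; omega
  set B : Vtx N M := if (j : ℕ) = 0 then Vtx.sel (Fin.last N) else Vtx.cls ⟨(j : ℕ) - 1, hBlt⟩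
    with hB
  have hsub : Finset.univ.filter (fun w => arc litf (Vtx.cls j) w ∧ inS f w) ⊆
      insert B ((Finset.univ.erase t0).image
        (fun t => Vtx.lit (litf j t).1 (!(litf j t).2))) := by
    intro w hw
    simp only [Finset.mem_filter, Finset.mem_univ, true_and] at hw
    obtain ⟨h1, h2⟩ := hw
    rw [Finset.mem_insert]
    cases w with
    | sel k =>
      left
      obtain ⟨hj0, hk⟩ : (j : ℕ) = 0 ∧ k = Fin.last N := h1
      rw [hB, if_pos hj0, hk]
    | cls j' =>
      left
      have h1' : (j : ℕ) = (j' : ℕ) + 1 := h1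
      rw [hB, if_neg (by omega)]
      have : j' = (⟨(j : ℕ) - 1, hBlt⟩ : Fin M) := Fin.ext (by simp; omega)
      rw [this]
    | lit i b =>
      right
      obtain ⟨t, ht⟩ : ∃ t, litf j t = (i, !b) := h1
      have hb : b = f i := h2
      rw [Finset.mem_image]
      refine ⟨t, Finset.mem_erase.2 ⟨?_, Finset.mem_univ _⟩, ?_⟩
      · rintro rfl
        rw [ht] at ht0
        simp only at ht0
        rw [hb] at ht0
        simp at ht0
      · rw [ht]
        simp [hb]
  calc (Finset.univ.filter (fun w => arc litf (Vtx.cls j) w ∧ inS f w)).card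
      ≤ _ := Finset.card_le_card hsub
    _ ≤ ((Finset.univ.erase t0).image
          (fun t => Vtx.lit (litf j t).1 (!(litf j t).2))).card + 1 :=
        Finset.card_insert_le _ _
    _ ≤ (Finset.univ.erase t0).card + 1 := by
        exact Nat.add_le_add_right (Finset.card_image_le) 1
    _ ≤ 3 := by
        rw [Finset.card_erase_of_mem (Finset.mem_univ _)]
        simp

/-- The cost of any normal agent at `x⁰` is zero. -/
lemma cost_x0_zero {μ : ℝ} (v : Vtx N M) : cost μ (x0 (N := N) (M := M)) v = 0 := by
  rw [cost]
  have hsum : ∑ b : Agent N M, x0 (some v) b = 0 := by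
    apply Finset.sum_eq_zero; intro b _; simp [x0]
  have hτ : (0 : ℝ) ≤ τ v := by
    cases v with
    | sel k => norm_num [τ]
    | lit i b => norm_num [τ]
    | cls j => norm_num [τ]
  rw [hsum, max_eq_right (by linarith), mul_zero]

lemma x0_in_sum_zero {litf : Fin M → Fin 3 → Fin N × Bool} (v : Vtx N M) :
    ∑ w ∈ Finset.univ.filter (fun w => arc litf w v),
      x0 (N := N) (M := M) (some w) (some v) = 0 :=
  Finset.sum_eq_zero (fun w _ => by simp [x0])

/-- Utility of a selection agent at `x⁰`. -/
lemma util_x0_sel {ε μ : ℝ} {litf : Fin M → Fin 3 → Fin N × Bool} (k : Fin (N + 1)) :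
    util ε μ litf (x0 (N := N) (M := M)) (some (Vtx.sel k)) = 1 - ε := by
  have h1 : util ε μ litf (x0 (N := N) (M := M)) (some (Vtx.sel k))
      = payoff ε litf x0 (Vtx.sel k) - cost μ x0 (Vtx.sel k) := rfl
  have h2 : payoff ε litf (x0 (N := N) (M := M)) (Vtx.sel k)
      = (1 - ε) * x0 none (some (Vtx.sel k))
        + ∑ w ∈ Finset.univ.filter (fun w => arc litf w (Vtx.sel k)),
            x0 (some w) (some (Vtx.sel k)) := rfl
  have h3 : x0 (N := N) (M := M) none (some (Vtx.sel k)) = 1 := by simp [x0]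
  rw [h1, cost_x0_zero, sub_zero, h2, h3, x0_in_sum_zero, mul_one, add_zero]

/-- Utility of a clause agent at `x⁰`. -/
lemma util_x0_cls {ε μ : ℝ} {litf : Fin M → Fin 3 → Fin N × Bool} (j : Fin M) :
    util ε μ litf (x0 (N := N) (M := M)) (some (Vtx.cls j)) = 1 - ε := by
  have h1 : util ε μ litf (x0 (N := N) (M := M)) (some (Vtx.cls j))
      = payoff ε litf x0 (Vtx.cls j) - cost μ x0 (Vtx.cls j) := rfl
  have h2 : payoff ε litf (x0 (N := N) (M := M)) (Vtx.cls j)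
      = (1 - ε) * x0 none (some (Vtx.cls j))
        + ∑ w ∈ Finset.univ.filter (fun w => arc litf w (Vtx.cls j)),
            x0 (some w) (some (Vtx.cls j)) := rfl
  have h3 : x0 (N := N) (M := M) none (some (Vtx.cls j)) = 1 := by simp [x0]
  rw [h1, cost_x0_zero, sub_zero, h2, h3, x0_in_sum_zero, mul_one, add_zero]

/-- Utility of a literal agent at `x⁰`. -/
lemma util_x0_lit {ε μ : ℝ} {litf : Fin M → Fin 3 → Fin N × Bool} (i : Fin N) (b : Bool) :
    util ε μ litf (x0 (N := N) (M := M)) (some (Vtx.lit i b))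
      = (inDeg litf (Vtx.lit i b) : ℝ) - ε := by
  have h1 : util ε μ litf (x0 (N := N) (M := M)) (some (Vtx.lit i b))
      = payoff ε litf x0 (Vtx.lit i b) - cost μ x0 (Vtx.lit i b) := rfl
  have h2 : payoff ε litf (x0 (N := N) (M := M)) (Vtx.lit i b)
      = ((inDeg litf (Vtx.lit i b) : ℝ) - ε) * x0 none (some (Vtx.lit i b))
        + ∑ w ∈ Finset.univ.filter (fun w => arc litf w (Vtx.lit i b)),
            x0 (some w) (some (Vtx.lit i b)) := rfl
  have h3 : x0 (N := N) (M := M) none (some (Vtx.lit i b)) = 1 := by simp [x0]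
  rw [h1, cost_x0_zero, sub_zero, h2, h3, x0_in_sum_zero, mul_one, add_zero]

/-- Utility of a normal agent at the blocking exchange, written as payoff minus cost. -/
lemma util_yex {ε μ : ℝ} {litf : Fin M → Fin 3 → Fin N × Bool} {f : Fin N → Bool}
    (v : Vtx N M) :
    util ε μ litf (yex litf f) (some v)
      = payoff ε litf (yex litf f) v - cost μ (yex litf f) v := rfl

/-- In the instance `D′(φ)`, if the 3-CNF formula `φ` is satisfiable, then
the data exchange `x⁰` is not core-stable. -/
theorem satisfiable_implies_x0_not_core_stable
    (N M : ℕ) (hM : 0 < M) (litf : Fin M → Fin 3 → Fin N × Bool)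
    (ε μ : ℝ) (hε0 : 0 < ε) (hε1 : ε < 1/4) (hμ0 : 0 < μ) (hμ1 : μ < 1 - 4 * ε)
    (hsat : Satisfiable litf) :
    ¬ CoreStable (util ε μ litf) (x0 (N := N) (M := M)) := by
  obtain ⟨f, hf⟩ := hsat
  intro hcs
  apply hcs
  refine ⟨{a : Agent N M | ∃ v, inS f v ∧ a = some v}, yex litf f,
    ⟨some (Vtx.sel 0), ⟨Vtx.sel 0, trivial, rfl⟩⟩, ⟨⟨?_, ?_⟩, ?_⟩, ?_⟩
  · -- entries in [0,1]
    intro a b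
    refine ⟨yex_nonneg a b, ?_⟩
    rcases a with _ | v
    · rw [yex_none]; norm_num
    · rcases b with _ | w
      · rw [yex_some_none]; norm_num
      · rw [yex_some_some]; split_ifs <;> norm_num
  · -- zero diagonal
    intro a
    rcases a with _ | v
    · rw [yex_none]
    · rw [yex_some_some, if_neg (fun h => arc_irrefl v h.1)]
  · -- zero outside the coalition
    intro a b h
    rcases a with _ | v
    · rw [yex_none]
    · rcases b with _ | w
      · rw [yex_some_none]
      · rw [yex_some_some, if_neg]
        rintro ⟨-, hvS, hwS⟩
        rcases h with h | h
        · exact h ⟨v, hvS, rfl⟩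
        · exact h ⟨w, hwS, rfl⟩
  · -- strict improvement for every coalition member
    rintro a ⟨v, hv, rfl⟩
    cases v with
    | sel k =>
      have hcost : cost μ (yex litf f) (Vtx.sel k) = 0 := by
        apply cost_yex_zero (show inS (N := N) (M := M) f (Vtx.sel k) from trivial)
        have h := sel_out_card (litf := litf) (f := f) k
        have hτ : τ (N := N) (M := M) (Vtx.sel k) = (1 : ℝ) := rfl
        rw [hτ]
        exact_mod_cast h
      have hpay : (1 : ℝ) ≤ payoff ε litf (yex litf f) (Vtx.sel k) := by
        have h2 : payoff ε litf (yex litf f) (Vtx.sel k)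
            = (1 - ε) * yex litf f none (some (Vtx.sel k))
              + ∑ w ∈ Finset.univ.filter (fun w => arc litf w (Vtx.sel k)),
                  yex litf f (some w) (some (Vtx.sel k)) := rfl
        rw [h2, yex_none, mul_zero, zero_add]
        by_cases hk : (k : ℕ) < N
        · exact insum_ge_one trivial (Vtx.lit ⟨(k : ℕ), hk⟩ (f ⟨(k : ℕ), hk⟩))
            (Fin.ext rfl) rfl
        · have hk' : (k : ℕ) = N := by have := k.isLt; omega
          exact insum_ge_one trivial (Vtx.cls ⟨0, hM⟩) ⟨rfl, Fin.ext hk'⟩ trivial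
      rw [util_x0_sel, util_yex, hcost, sub_zero]
      linarith
    | lit i b =>
      have hcost : cost μ (yex litf f) (Vtx.lit i b) = 0 := by
        apply cost_yex_zero hv
        have h := lit_out_card (litf := litf) (f := f) i b
        have hτ : τ (N := N) (M := M) (Vtx.lit i b) = (1 : ℝ) := rfl
        rw [hτ]
        exact_mod_cast h
      have hpay : payoff ε litf (yex litf f) (Vtx.lit i b)
          = (inDeg litf (Vtx.lit i b) : ℝ) := by
        have h2 : payoff ε litf (yex litf f) (Vtx.lit i b)
            = ((inDeg litf (Vtx.lit i b) : ℝ) - ε) * yex litf f none (some (Vtx.lit i b))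
              + ∑ w ∈ Finset.univ.filter (fun w => arc litf w (Vtx.lit i b)),
                  yex litf f (some w) (some (Vtx.lit i b)) := rfl
        rw [h2, yex_none, mul_zero, zero_add, insum_lit hv]
      rw [util_x0_lit, util_yex, hcost, sub_zero, hpay]
      linarith
    | cls j =>
      obtain ⟨t0, ht0⟩ := hf j
      have hcost : cost μ (yex litf f) (Vtx.cls j) = 0 := by
        apply cost_yex_zero (show inS (N := N) (M := M) f (Vtx.cls j) from trivial)
        have h := cls_out_card (litf := litf) (f := f) j t0 ht0
        have hτ : τ (N := N) (M := M) (Vtx.cls j) = (3 : ℝ) := rfl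
        rw [hτ]
        exact_mod_cast h
      have hpay : (1 : ℝ) ≤ payoff ε litf (yex litf f) (Vtx.cls j) := by
        have h2 : payoff ε litf (yex litf f) (Vtx.cls j)
            = (1 - ε) * yex litf f none (some (Vtx.cls j))
              + ∑ w ∈ Finset.univ.filter (fun w => arc litf w (Vtx.cls j)),
                  yex litf f (some w) (some (Vtx.cls j)) := rfl
        rw [h2, yex_none, mul_zero, zero_add]
        by_cases hj : (j : ℕ) + 1 < M
        · exact insum_ge_one trivial (Vtx.cls ⟨(j : ℕ) + 1, hj⟩) rfl trivial
        · have hj' : (j : ℕ) = M - 1 := by have := j.isLt; omega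
          exact insum_ge_one trivial (Vtx.sel 0) ⟨rfl, hj'⟩ trivial
      rw [util_x0_cls, util_yex, hcost, sub_zero]
      linarith

end
end DataExchangeSAT
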